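/- For any real α, real t > 0, and natural number m, the Hankel contour integral (1/(2πi)) ∫_{−∞}^{(0+)} (√z)^{m−1} e^{−α√z} e^{zt} dz equals (1/√(πt)) · (1/(2√t))^m · e^{−α²/(4t)} · H_m(α/(2√t)), where H_m is the m-th Hermite polynomial. -/

import Mathlib

open Complex Real MeasureTheory Set FourierTransform

/-- The (physicists') Hermite polynomials `H_m(x) = (−1)^m e^{x²} (d/dx)^m e^{−x²}`. -/
noncomputable def physHermite (m : ℕ) (x : ℝ) : ℝ :=
  (-1 : ℝ) ^ m * Real.exp (x ^ 2) * iteratedDeriv m (fun u : ℝ => Real.exp (-u ^ 2)) x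

lemma toplt {n : ℕ} : (n : WithTop ℕ∞) < ⊤ := by
  exact_mod_cast WithTop.coe_lt_top (n : ℕ∞)

lemma contDiff_g : ContDiff ℝ ⊤ (fun u : ℝ => Real.exp (-u ^ 2)) :=
  Real.contDiff_exp.comp ((contDiff_id.pow 2).neg)

lemma iteratedDeriv_ofReal (f : ℝ → ℝ) (hf : ContDiff ℝ ⊤ f) (n : ℕ) :
    iteratedDeriv n (fun x => ((f x : ℝ) : ℂ)) = fun x => ((iteratedDeriv n f x : ℝ) : ℂ) := by
  induction n with
  | zero => simp
  | succ n ih =>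
    rw [iteratedDeriv_succ, ih, iteratedDeriv_succ]
    funext x
    have h : DifferentiableAt ℝ (iteratedDeriv n f) x :=
      (hf.differentiable_iteratedDeriv n toplt).differentiableAt
    exact (h.hasDerivAt.ofReal_comp).deriv

lemma iteratedDeriv_const_mul_complex (n : ℕ) (C : ℂ) {f : ℝ → ℂ} (hf : ContDiff ℝ ⊤ f) :
    iteratedDeriv n (fun x => C * f x) = fun x => C * iteratedDeriv n f x := by
  induction n with
  | zero => simp
  | succ n ih =>
    rw [iteratedDeriv_succ, ih, iteratedDeriv_succ]
    funext x
    exact deriv_const_mul C ((hf.differentiable_iteratedDeriv n toplt).differentiableAt)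

lemma iteratedDeriv_g_eq (m : ℕ) (x : ℝ) :
    iteratedDeriv m (fun u : ℝ => Real.exp (-u ^ 2)) x
      = (-1 : ℝ) ^ m * (Real.exp (-x ^ 2) * physHermite m x) := by
  rw [physHermite]
  rw [show (-1:ℝ)^m * (Real.exp (-x^2) * ((-1:ℝ)^m * Real.exp (x^2) *
      iteratedDeriv m (fun u : ℝ => Real.exp (-u ^ 2)) x))
    = ((-1:ℝ)^m)^2 * (Real.exp (-x^2) * Real.exp (x^2)) *
      iteratedDeriv m (fun u : ℝ => Real.exp (-u ^ 2)) x by ring]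
  rw [← Real.exp_add, neg_add_cancel, Real.exp_zero, ← pow_mul, mul_comm m 2, pow_mul]
  norm_num

lemma cexp_neg_t_sq (t x : ℝ) :
    Complex.exp (-(t:ℂ) * (x:ℂ) ^ 2) = ((Real.exp (-t * x ^ 2) : ℝ) : ℂ) := by
  rw [Complex.ofReal_exp]; congr 1; push_cast; ring

lemma gauss_pow_integrable {t : ℝ} (ht : 0 < t) (n : ℕ) :
    Integrable (fun x : ℝ => x ^ n • Complex.exp (-(t:ℂ) * (x:ℂ) ^ 2)) := by
  have hb : Integrable (fun x : ℝ => |x ^ (n:ℝ) * Real.exp (-t * x ^ 2)|) :=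
    (integrable_rpow_mul_exp_neg_mul_sq ht
      (by exact_mod_cast neg_one_lt_zero.trans_le (Nat.cast_nonneg n) : (-1:ℝ) < n)).abs
  refine hb.mono' ?_ ?_
  · apply Continuous.aestronglyMeasurable
    fun_prop
  · filter_upwards with x
    rw [norm_smul, cexp_neg_t_sq, Complex.norm_real, Real.norm_eq_abs, Real.norm_eq_abs,
      Real.rpow_natCast, abs_mul, _root_.abs_pow]

lemma fourier_gaussian {t : ℝ} (ht : 0 < t) :
    (𝓕 fun x : ℝ => Complex.exp (-(t:ℂ) * (x:ℂ) ^ 2))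
      = fun ξ : ℝ => ((π : ℂ) / t) ^ (1/2 : ℂ) *
          Complex.exp (-(((π/Real.sqrt t) * ξ : ℝ) : ℂ) ^ 2) := by
  funext ξ
  rw [Real.fourier_real_eq_integral_exp_smul]
  have h1 : ∀ v : ℝ, Complex.exp (↑(-2 * π * v * ξ) * I) • Complex.exp (-(t:ℂ) * (v:ℂ) ^ 2)
      = Complex.exp (I * ((-2 * π * ξ : ℝ) : ℂ) * v) * Complex.exp (-(t:ℂ) * (v:ℂ) ^ 2) := by
    intro v
    rw [smul_eq_mul]
    congr 2
    push_cast
    ring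
  simp_rw [h1]
  rw [fourierIntegral_gaussian (by simpa using ht) (((-2 * π * ξ : ℝ) : ℂ))]
  congr 2
  have h2 : (Real.sqrt t : ℂ) ^ 2 = (t : ℂ) := by
    rw [← Complex.ofReal_pow, Real.sq_sqrt ht.le]
  have h3 : (Real.sqrt t : ℂ) ≠ 0 := by
    simpa using (Real.sqrt_pos.mpr ht).ne'
  push_cast
  rw [← h2]
  field_simp
  ring

lemma gauss_moment {t : ℝ} (ht : 0 < t) (α : ℝ) (m : ℕ) :
    ∫ x : ℝ, (x:ℂ) ^ m * (Complex.exp (↑(α * x) * I) * Complex.exp (-(t:ℂ) * (x:ℂ) ^ 2))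
      = (Real.sqrt (π/t) : ℂ) * (I / (2 * Real.sqrt t)) ^ m *
          ((Real.exp (-(α/(2*Real.sqrt t))^2) * physHermite m (α/(2*Real.sqrt t)) : ℝ) : ℂ) := by
  have hst : Real.sqrt t ≠ 0 := (Real.sqrt_pos.mpr ht).ne'
  have hπ : (π : ℝ) ≠ 0 := Real.pi_ne_zero
  set f : ℝ → ℂ := fun x : ℝ => Complex.exp (-(t:ℂ) * (x:ℂ) ^ 2) with hf
  set ξ₀ : ℝ := -α / (2 * π) with hξ₀
  have key := congrFun (Real.iteratedDeriv_fourier (f := f) (N := m)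
    (fun n _ => gauss_pow_integrable ht n) le_rfl) ξ₀
  -- RHS of key
  rw [Real.fourier_real_eq_integral_exp_smul] at key
  have hR : ∀ v : ℝ, Complex.exp (↑(-2 * π * v * ξ₀) * I) • ((-2 * ↑π * I * ↑v) ^ m • f v)
      = (-2 * ↑π * I) ^ m * ((v:ℂ) ^ m * (Complex.exp (↑(α * v) * I) * f v)) := by
    intro v
    rw [smul_eq_mul, smul_eq_mul]
    have : (-2 * π * v * ξ₀ : ℝ) = α * v := by rw [hξ₀]; field_simp
    rw [this, show (-2 * (π:ℂ) * I * ↑v) ^ m = (-2 * ↑π * I) ^ m * (v:ℂ) ^ m by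
      rw [← mul_pow]]
    ring
  simp_rw [hR, MeasureTheory.integral_const_mul] at key
  -- LHS of key: compute the iterated derivative of the Fourier transform
  have hGc : ContDiff ℝ ⊤ (fun x : ℝ => ((Real.exp (-x ^ 2) : ℝ) : ℂ)) :=
    Complex.ofRealCLM.contDiff.comp contDiff_g
  have hfg : (𝓕 f) = fun ξ : ℝ => ((π : ℂ) / t) ^ (1/2 : ℂ) *
      ((Real.exp (-(π / Real.sqrt t * ξ) ^ 2) : ℝ) : ℂ) := by
    rw [fourier_gaussian ht]
    funext ξ
    rw [Complex.ofReal_exp]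
    congr 2
    push_cast
    ring
  have hGc2 : ContDiff ℝ ⊤ (fun ξ : ℝ => ((Real.exp (-(π / Real.sqrt t * ξ) ^ 2) : ℝ) : ℂ)) := by
    have heq : (fun ξ : ℝ => ((Real.exp (-(π / Real.sqrt t * ξ) ^ 2) : ℝ) : ℂ))
        = (fun x : ℝ => ((Real.exp (-x ^ 2) : ℝ) : ℂ)) ∘ (fun ξ : ℝ => π / Real.sqrt t * ξ) := rfl
    rw [heq]
    exact hGc.comp ((contDiff_const (c := π / Real.sqrt t)).mul contDiff_id)
  rw [hfg, iteratedDeriv_const_mul_complex m _ hGc2] at key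
  have hsc := iteratedDeriv_comp_const_smul (n := m)
    (f := fun x : ℝ => ((Real.exp (-x ^ 2) : ℝ) : ℂ)) (hGc.of_le le_top) (π / Real.sqrt t)
  have hcu : π / Real.sqrt t * ξ₀ = -(α/(2*Real.sqrt t)) := by
    rw [hξ₀]; field_simp
  have hod := iteratedDeriv_ofReal (fun u : ℝ => Real.exp (-u ^ 2)) contDiff_g m
  simp only [hsc, hcu, hod] at key
  have hgneg : iteratedDeriv m (fun u : ℝ => Real.exp (-u ^ 2)) (-(α/(2*Real.sqrt t)))
      = (-1:ℝ)^m * iteratedDeriv m (fun u : ℝ => Real.exp (-u ^ 2)) (α/(2*Real.sqrt t)) := by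
    have h := iteratedDeriv_comp_neg m (fun u : ℝ => Real.exp (-u ^ 2)) (-(α/(2*Real.sqrt t)))
    simp only [neg_neg, smul_eq_mul] at h
    rw [← h]
    congr 1
    funext x
    ring_nf
  rw [hgneg, iteratedDeriv_g_eq] at key
  have hm2 : ((-1:ℝ)^m * ((-1:ℝ)^m * (Real.exp (-(α/(2*Real.sqrt t))^2)
        * physHermite m (α/(2*Real.sqrt t)))))
      = Real.exp (-(α/(2*Real.sqrt t))^2) * physHermite m (α/(2*Real.sqrt t)) := by
    rw [← mul_assoc, ← pow_add, ← two_mul, pow_mul]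
    norm_num
  rw [hm2] at key
  have hC : ((π : ℂ) / t) ^ (1/2 : ℂ) = ((Real.sqrt (π/t) : ℝ) : ℂ) := by
    rw [Real.sqrt_eq_rpow, Complex.ofReal_cpow (by positivity)]
    push_cast
    norm_num
  have h2πIne : ((-2 * (π:ℂ) * I) ^ m) ≠ 0 := by
    apply pow_ne_zero
    simp [I_ne_zero, Complex.ofReal_ne_zero.mpr hπ]
  have h2πI : ((-2 * (π:ℂ) * I) ^ m)⁻¹ * ((π / Real.sqrt t : ℝ) : ℂ) ^ m
      = (I / (2 * Real.sqrt t)) ^ m := by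
    rw [← inv_pow, ← mul_pow]
    congr 1
    have hne : (-2 * (π:ℂ) * I) ≠ 0 := by
      simp [I_ne_zero, Complex.ofReal_ne_zero.mpr hπ]
    have h2st : (2 * ((Real.sqrt t : ℝ) : ℂ)) ≠ 0 := by
      simp [Complex.ofReal_ne_zero.mpr hst]
    rw [inv_eq_one_div]
    push_cast
    rw [div_mul_eq_mul_div, div_eq_div_iff hne h2st]
    ring_nf
    rw [Complex.I_sq]
    have h2 : ((Real.sqrt t : ℝ) : ℂ) * ((Real.sqrt t : ℝ) : ℂ) ≠ 0 := by
      simp [Complex.ofReal_ne_zero.mpr hst]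
    have hstC : ((Real.sqrt t : ℝ) : ℂ) ≠ 0 := Complex.ofReal_ne_zero.mpr hst
    field_simp
  calc ∫ x : ℝ, (x:ℂ) ^ m * (Complex.exp (↑(α * x) * I) * f x)
      = ((-2 * (π:ℂ) * I) ^ m)⁻¹ * ((-2 * (π:ℂ) * I) ^ m *
          ∫ x : ℝ, (x:ℂ) ^ m * (Complex.exp (↑(α * x) * I) * f x)) := by
        rw [← mul_assoc, inv_mul_cancel₀ h2πIne, one_mul]
    _ = ((-2 * (π:ℂ) * I) ^ m)⁻¹ * (((π : ℂ) / t) ^ (1/2 : ℂ) *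
          ((π / Real.sqrt t : ℝ) ^ m • ((Real.exp (-(α/(2*Real.sqrt t))^2)
            * physHermite m (α/(2*Real.sqrt t)) : ℝ) : ℂ))) := by rw [← key]
    _ = (Real.sqrt (π/t) : ℂ) * (I / (2 * Real.sqrt t)) ^ m *
          ((Real.exp (-(α/(2*Real.sqrt t))^2) * physHermite m (α/(2*Real.sqrt t)) : ℝ) : ℂ) := by
        rw [hC, ← h2πI]
        rw [real_smul]
        push_cast
        ring

open MeasureTheory in
/-- The Hankel contour integral `(1/(2πi)) ∫_{−∞}^{(0+)} (√z)^{m−1} e^{−α√z} e^{zt} dz`,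
written out via the two edges of the branch cut along the negative real axis
(`√z = ∓i√x` on the lower/upper edge at `z = −x`, `x > 0`). -/
noncomputable def hankel16 (m : ℕ) (α t : ℝ) : ℂ :=
  (1 / (2 * Real.pi * Complex.I)) * ∫ x in Set.Ioi (0 : ℝ),
    ((-(Complex.I * (Real.sqrt x : ℂ))) ^ ((m : ℤ) - 1) *
        Complex.exp ((α : ℂ) * Complex.I * (Real.sqrt x : ℂ))
      - (Complex.I * (Real.sqrt x : ℂ)) ^ ((m : ℤ) - 1) *
        Complex.exp (-((α : ℂ) * Complex.I * (Real.sqrt x : ℂ)))) *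
    Complex.exp (-x * t)

section main
variable (α t : ℝ) (m : ℕ)

noncomputable def P (y : ℝ) : ℂ :=
  (-I) ^ m * ((y:ℂ) ^ m * (Complex.exp (↑(α * y) * I) * Complex.exp (-(t:ℂ) * (y:ℂ) ^ 2)))

lemma P_integrable (ht : 0 < t) : Integrable (P α t m) := by
  have h1 : Integrable (fun y : ℝ => Complex.exp (↑(α * y) * I) *
      (y ^ m • Complex.exp (-(t:ℂ) * (y:ℂ) ^ 2))) := by
    refine (gauss_pow_integrable ht m).bdd_mul (c := 1) ?_ (ae_of_all _ fun y => ?_)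
    · apply Continuous.aestronglyMeasurable
      fun_prop
    · rw [Complex.norm_exp]
      simp
  have h2 := h1.const_mul ((-I) ^ m)
  refine h2.congr ?_
  filter_upwards with y
  simp only [P, Complex.real_smul, smul_eq_mul]
  push_cast
  ring

lemma hankel_eq (ht : 0 < t) :
    hankel16 m α t = (1 / (2 * ↑π * I)) * ((2 * I) * ∫ y : ℝ, P α t m y) := by
  rw [hankel16]
  congr 1
  have hsub := integral_comp_rpow_Ioi (p := 2) (fun x : ℝ =>
    ((-(Complex.I * (Real.sqrt x : ℂ))) ^ ((m : ℤ) - 1) *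
        Complex.exp ((α : ℂ) * Complex.I * (Real.sqrt x : ℂ))
      - (Complex.I * (Real.sqrt x : ℂ)) ^ ((m : ℤ) - 1) *
        Complex.exp (-((α : ℂ) * Complex.I * (Real.sqrt x : ℂ)))) *
    Complex.exp (-x * t)) two_ne_zero
  rw [← hsub]
  have hpt : ∀ y ∈ Ioi (0:ℝ), (|2| * y ^ ((2:ℝ) - 1)) •
      ((((-(Complex.I * (Real.sqrt (y ^ (2:ℝ)) : ℂ))) ^ ((m : ℤ) - 1) *
        Complex.exp ((α : ℂ) * Complex.I * (Real.sqrt (y ^ (2:ℝ)) : ℂ))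
      - (Complex.I * (Real.sqrt (y ^ (2:ℝ)) : ℂ)) ^ ((m : ℤ) - 1) *
        Complex.exp (-((α : ℂ) * Complex.I * (Real.sqrt (y ^ (2:ℝ)) : ℂ)))) *
      Complex.exp (-(y ^ (2:ℝ) : ℝ) * t)))
      = (2 * I) * (P α t m y + P α t m (-y)) := by
    intro y hy
    have hy0 : (0:ℝ) < y := hy
    have hr2 : (y:ℝ) ^ (2:ℝ) = y ^ 2 := by
      rw [show (2:ℝ) = ((2:ℕ):ℝ) by norm_num, Real.rpow_natCast]
    have hsq : Real.sqrt (y ^ (2:ℝ)) = y := by rw [hr2, Real.sqrt_sq hy0.le]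
    rw [hsq, hr2, show |(2:ℝ)| = 2 from abs_of_pos two_pos,
      show (2:ℝ) - 1 = 1 by norm_num, Real.rpow_one]
    have hyC : (y:ℂ) ≠ 0 := Complex.ofReal_ne_zero.mpr hy0.ne'
    have hIy : Complex.I * (y:ℂ) ≠ 0 := mul_ne_zero I_ne_zero hyC
    have hnIy : -(Complex.I * (y:ℂ)) ≠ 0 := neg_ne_zero.mpr hIy
    rw [zpow_sub_one₀ hnIy, zpow_sub_one₀ hIy, zpow_natCast, zpow_natCast,
      show -(Complex.I * (y:ℂ)) = (-I) * (y:ℂ) by ring, mul_pow, mul_pow, P, P]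
    have e1 : Complex.exp ((α : ℂ) * Complex.I * (y : ℂ)) = Complex.exp (↑(α * y) * I) := by
      congr 1; push_cast; ring
    have e2 : Complex.exp (-((α : ℂ) * Complex.I * (y : ℂ)))
        = Complex.exp (↑(α * -y) * I) := by congr 1; push_cast; ring
    have e3 : Complex.exp (-((y ^ 2 : ℝ) : ℂ) * (t:ℂ)) = Complex.exp (-(t:ℂ) * (y:ℂ) ^ 2) := by
      congr 1; push_cast; ring
    have e4 : ((-y : ℝ) : ℂ) ^ m = (-1:ℂ) ^ m * (y:ℂ) ^ m := by
      push_cast; rw [neg_pow]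
    have e5 : Complex.exp (-(t:ℂ) * ((-y:ℝ):ℂ) ^ 2) = Complex.exp (-(t:ℂ) * (y:ℂ) ^ 2) := by
      congr 1; push_cast; ring
    have epow : (I:ℂ) ^ m = (-1:ℂ) ^ m * (-I) ^ m := by
      rw [← mul_pow]; norm_num
    rw [e1, e2, e3, e4, e5, epow, mul_inv ((-I:ℂ)) (y:ℂ), inv_neg, Complex.inv_I, neg_neg,
      mul_inv (I:ℂ) (y:ℂ), Complex.inv_I, real_smul]
    push_cast
    field_simp
    ring
  rw [setIntegral_congr_fun measurableSet_Ioi hpt]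
  rw [MeasureTheory.integral_const_mul]
  congr 1
  have hint : Integrable (P α t m) := P_integrable α t m ht
  rw [integral_add (hint.integrableOn) ((hint.comp_neg).integrableOn)]
  have hneg : ∫ y in Ioi (0:ℝ), P α t m (-y) = ∫ y in Iic (0:ℝ), P α t m y := by
    simpa using integral_comp_neg_Ioi (0:ℝ) (P α t m)
  rw [hneg, add_comm]
  rw [← compl_Iic, integral_add_compl measurableSet_Iic hint]

end main

/-- For real `α`, `t > 0` and `m : ℕ`,
`(1/(2πi)) ∫_{−∞}^{(0+)} (√z)^{m−1} e^{−α√z} e^{zt} dz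
 = (1/√(πt)) (1/(2√t))^m e^{−α²/(4t)} H_m(α/(2√t))`. -/
theorem stmt16 (α t : ℝ) (ht : 0 < t) (m : ℕ) :
    hankel16 m α t
      = ((1 / Real.sqrt (Real.pi * t)) * (1 / (2 * Real.sqrt t)) ^ m *
          Real.exp (-α ^ 2 / (4 * t)) * physHermite m (α / (2 * Real.sqrt t)) : ℝ) := by
  have hst : Real.sqrt t ≠ 0 := (Real.sqrt_pos.mpr ht).ne'
  rw [hankel_eq α t m ht]
  have hP : ∫ y : ℝ, P α t m y = (-I) ^ m *
      ∫ x : ℝ, (x:ℂ) ^ m * (Complex.exp (↑(α * x) * I) * Complex.exp (-(t:ℂ) * (x:ℂ) ^ 2)) := by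
    simp only [P]
    rw [MeasureTheory.integral_const_mul]
  rw [hP, gauss_moment ht α m]
  have h1 : (1 / (2 * (π:ℂ) * I)) * (2 * I) = 1 / (π:ℂ) := by
    have hπC : ((π:ℝ) : ℂ) ≠ 0 := Complex.ofReal_ne_zero.mpr Real.pi_ne_zero
    field_simp
  have hpow : ((-I:ℂ)) ^ m * (I / (2 * ((Real.sqrt t : ℝ) : ℂ))) ^ m
      = (((1 / (2 * Real.sqrt t) : ℝ)) : ℂ) ^ m := by
    rw [← mul_pow]
    congr 1
    rw [show (-I) * (I / (2 * ((Real.sqrt t : ℝ) : ℂ))) = -(I*I)/(2 * ((Real.sqrt t : ℝ) : ℂ))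
      by ring, Complex.I_mul_I]
    push_cast
    norm_num
  have hsqrt : Real.sqrt (π*t) * Real.sqrt (π/t) = π := by
    rw [← Real.sqrt_mul (by positivity), show π*t*(π/t) = π^2 by field_simp,
      Real.sqrt_sq Real.pi_pos.le]
  have hreal : (1/π) * Real.sqrt (π/t) = 1/Real.sqrt (π*t) := by
    rw [div_mul_eq_mul_div, one_mul, div_eq_div_iff Real.pi_pos.ne'
      (Real.sqrt_pos.mpr (by positivity : (0:ℝ) < π*t)).ne', one_mul, mul_comm, hsqrt]
  have hexp : Real.exp (-α ^ 2 / (4 * t)) = Real.exp (-(α/(2*Real.sqrt t))^2) := by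
    congr 1
    rw [div_pow, mul_pow, Real.sq_sqrt ht.le]
    ring
  rw [hexp]
  calc (1 / (2 * (π:ℂ) * I)) * ((2 * I) * ((-I) ^ m *
        ((Real.sqrt (π/t) : ℂ) * (I / (2 * Real.sqrt t)) ^ m *
          ((Real.exp (-(α/(2*Real.sqrt t))^2) * physHermite m (α/(2*Real.sqrt t)) : ℝ) : ℂ))))
      = ((1 / (2 * (π:ℂ) * I)) * (2 * I)) * (Real.sqrt (π/t) : ℂ) *
          (((-I:ℂ)) ^ m * (I / (2 * ((Real.sqrt t : ℝ) : ℂ))) ^ m) *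
          ((Real.exp (-(α/(2*Real.sqrt t))^2) * physHermite m (α/(2*Real.sqrt t)) : ℝ) : ℂ) := by
        ring
    _ = ((1/π * Real.sqrt (π/t) : ℝ) : ℂ) *
          (((1 / (2 * Real.sqrt t) : ℝ)) : ℂ) ^ m *
          ((Real.exp (-(α/(2*Real.sqrt t))^2) * physHermite m (α/(2*Real.sqrt t)) : ℝ) : ℂ) := by
        rw [h1, hpow]
        push_cast
        ring
    _ = _ := by
        rw [hreal]
        push_cast
        ring
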